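/- (Zhang) For a natural number d ≥ 1, the family ((2ℕ)^{−dα})_{α ∈ ℕ →₀ ℕ} is summable if and only if d > 1, where (2ℕ)^{α} = ∏_{k ∈ supp(α)} (2(k+1))^{α_k}. -/

import Mathlib

/-- The weight `(2ℕ)^α = ∏_{k ∈ supp α} (2(k+1))^(α k)` on the free commutative
monoid `ℕ →₀ ℕ`. -/
noncomputable def twoNpow (α : ℕ →₀ ℕ) : ℝ :=
  ∏ k ∈ α.support, ((2 * ((k : ℝ) + 1)) ^ (α k))

namespace ZhangAux

noncomputable def q (d k : ℕ) : ℝ := ((2 * ((k : ℝ) + 1)) ^ d)⁻¹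

lemma q_pos (d k : ℕ) : 0 < q d k := by unfold q; positivity

lemma q_le_half (d k : ℕ) (hd : 1 ≤ d) : q d k ≤ 1 / 2 := by
  unfold q
  rw [inv_le_comm₀ (by positivity) (by norm_num)]
  calc (1 / 2 : ℝ)⁻¹ = 2 := by norm_num
    _ ≤ 2 * ((k : ℝ) + 1) := by nlinarith [Nat.cast_nonneg (α := ℝ) k]
    _ ≤ (2 * ((k : ℝ) + 1)) ^ d :=
        le_self_pow₀ (by nlinarith [Nat.cast_nonneg (α := ℝ) k]) (by omega)

lemma q_lt_one (d k : ℕ) (hd : 1 ≤ d) : q d k < 1 :=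
  lt_of_le_of_lt (q_le_half d k hd) (by norm_num)

lemma summable_q (d : ℕ) (hd : 2 ≤ d) : Summable (q d) := by
  have h2 : Summable (fun k : ℕ => 1 / ((k : ℝ) + 1) ^ 2) := by
    have := (summable_nat_add_iff (f := fun n : ℕ => 1 / (n : ℝ) ^ 2) 1).mpr
      (Real.summable_one_div_nat_pow.mpr one_lt_two)
    simpa using this
  refine h2.of_nonneg_of_le (fun k => (q_pos d k).le) fun k => ?_
  unfold q
  rw [one_div, inv_le_inv₀ (by positivity) (by positivity)]
  calc ((k : ℝ) + 1) ^ 2 ≤ (2 * ((k : ℝ) + 1)) ^ 2 := by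
        apply pow_le_pow_left₀ (by positivity); nlinarith [Nat.cast_nonneg (α := ℝ) k]
    _ ≤ (2 * ((k : ℝ) + 1)) ^ d :=
        pow_le_pow_right₀ (by nlinarith [Nat.cast_nonneg (α := ℝ) k]) hd

lemma f_eq (d : ℕ) (α : ℕ →₀ ℕ) :
    1 / (twoNpow α) ^ d = ∏ k ∈ α.support, q d k ^ α k := by
  unfold twoNpow q
  rw [one_div, ← Finset.prod_pow, ← Finset.prod_inv_distrib]
  refine Finset.prod_congr rfl fun k _ => ?_
  rw [← pow_mul, mul_comm (α k) d, pow_mul, inv_pow]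

lemma f_eq' (d : ℕ) (α : ℕ →₀ ℕ) {s : Finset ℕ} (hs : α.support ⊆ s) :
    ∏ k ∈ α.support, q d k ^ α k = ∏ k ∈ s, q d k ^ α k := by
  refine Finset.prod_subset hs fun x _ hx => ?_
  rw [Finsupp.notMem_support_iff.mp hx, pow_zero]

lemma geom_le (d k : ℕ) (hd : 1 ≤ d) (M : ℕ) :
    ∑ j ∈ Finset.range M, q d k ^ j ≤ Real.exp (2 * q d k) := by
  set r := q d k with hr
  have hr0 : 0 ≤ r := (q_pos d k).le
  have hr1 : r < 1 := q_lt_one d k hd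
  have hrh : r ≤ 1 / 2 := q_le_half d k hd
  have h1 : ∑ j ∈ Finset.range M, r ^ j ≤ (1 - r)⁻¹ := by
    rw [← tsum_geometric_of_lt_one hr0 hr1]
    exact Summable.sum_le_tsum _ (fun j _ => pow_nonneg hr0 _) (summable_geometric_of_lt_one hr0 hr1)
  have h2 : (1 - r)⁻¹ ≤ 1 + 2 * r := by
    rw [inv_eq_one_div, div_le_iff₀ (by linarith)]
    nlinarith
  have h3 : 1 + 2 * r ≤ Real.exp (2 * r) := by
    have := Real.add_one_le_exp (2 * r); linarith
  linarith

lemma main_summable (d : ℕ) (hd : 2 ≤ d) :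
    Summable fun α : ℕ →₀ ℕ => 1 / (twoNpow α) ^ d := by
  have hd1 : 1 ≤ d := le_trans one_le_two hd
  set C := ∑' k, q d k with hC
  apply summable_of_sum_le (c := Real.exp (2 * C))
  · intro α
    simp only [Pi.zero_apply]
    rw [f_eq d α]
    exact Finset.prod_nonneg fun k _ => pow_nonneg (q_pos d k).le _
  · intro u
    classical
    set N := u.sup (fun α => α.support.sup id + 1) with hN
    set M := u.sup (fun α => α.support.sup α) + 1 with hM
    have hsupp : ∀ α ∈ u, α.support ⊆ Finset.range N := by
      intro α hα k hk
      rw [Finset.mem_range]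
      calc k = id k := rfl
        _ ≤ α.support.sup id := Finset.le_sup hk
        _ < α.support.sup id + 1 := Nat.lt_succ_self _
        _ ≤ N := Finset.le_sup (f := fun α => α.support.sup id + 1) hα
    have hval : ∀ α ∈ u, ∀ k, α k < M := by
      intro α hα k
      by_cases hk : k ∈ α.support
      · calc α k ≤ α.support.sup α := Finset.le_sup hk
          _ < M := Nat.lt_succ_of_le (Finset.le_sup (f := fun α => α.support.sup α) hα)
      · rw [Finsupp.notMem_support_iff.mp hk]
        exact Nat.pos_of_ne_zero (by simp [hM])
    have hinj : ∀ α ∈ u, ∀ β ∈ u,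
        (fun k (_ : k ∈ Finset.range N) => α k) = (fun k (_ : k ∈ Finset.range N) => β k) →
        α = β := by
      intro α hα β hβ hab
      ext k
      by_cases hk : k < N
      · exact congrFun (congrFun hab k) (Finset.mem_range.mpr hk)
      · have h1 : k ∉ α.support := fun h => hk (Finset.mem_range.mp (hsupp α hα h))
        have h2 : k ∉ β.support := fun h => hk (Finset.mem_range.mp (hsupp β hβ h))
        rw [Finsupp.notMem_support_iff.mp h1, Finsupp.notMem_support_iff.mp h2]
    calc ∑ α ∈ u, 1 / (twoNpow α) ^ d
        = ∑ α ∈ u, ∏ k ∈ Finset.range N, q d k ^ α k := by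
          refine Finset.sum_congr rfl fun α hα => ?_
          rw [f_eq d α, f_eq' d α (hsupp α hα)]
      _ = ∑ α ∈ u, ∏ x ∈ (Finset.range N).attach, q d x.1 ^ α x.1 :=
          Finset.sum_congr rfl fun α _ =>
            (Finset.prod_attach _ fun k => q d k ^ α k).symm
      _ = ∑ p ∈ u.image (fun α : ℕ →₀ ℕ => fun k (_ : k ∈ Finset.range N) => α k),
            ∏ x ∈ (Finset.range N).attach, q d x.1 ^ (p x.1 x.2) := by
          rw [Finset.sum_image hinj]
      _ ≤ ∑ p ∈ (Finset.range N).pi (fun _ => Finset.range M),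
            ∏ x ∈ (Finset.range N).attach, q d x.1 ^ (p x.1 x.2) := by
          refine Finset.sum_le_sum_of_subset_of_nonneg ?_ (fun p _ _ =>
            Finset.prod_nonneg fun x _ => pow_nonneg (q_pos d x.1).le _)
          intro p hp
          obtain ⟨α, hα, rfl⟩ := Finset.mem_image.mp hp
          rw [Finset.mem_pi]
          intro k _
          exact Finset.mem_range.mpr (hval α hα k)
      _ = ∏ k ∈ Finset.range N, ∑ j ∈ Finset.range M, q d k ^ j :=
          (Finset.prod_sum (Finset.range N) (fun _ => Finset.range M) (fun k j => q d k ^ j)).symm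
      _ ≤ ∏ k ∈ Finset.range N, Real.exp (2 * q d k) := by
          refine Finset.prod_le_prod (fun k _ => ?_) (fun k _ => geom_le d k hd1 M)
          exact Finset.sum_nonneg fun j _ => pow_nonneg (q_pos d k).le _
      _ = Real.exp (∑ k ∈ Finset.range N, 2 * q d k) := (Real.exp_sum _ _).symm
      _ ≤ Real.exp (2 * C) := by
          apply Real.exp_le_exp.mpr
          rw [← Finset.mul_sum]
          have : ∑ k ∈ Finset.range N, q d k ≤ C :=
            Summable.sum_le_tsum _ (fun k _ => (q_pos d k).le) (summable_q d hd)
          linarith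

end ZhangAux

/-- (Zhang) For `d ≥ 1`, the family `((2ℕ)^α)⁻ᵈ` over `α ∈ ℕ →₀ ℕ` is summable
if and only if `d > 1`. -/
theorem zhang_summable_iff (d : ℕ) (hd : 1 ≤ d) :
    (Summable fun α : ℕ →₀ ℕ => 1 / (twoNpow α) ^ d) ↔ 1 < d := by
  constructor
  · intro hs
    by_contra h
    have hd1 : d = 1 := by omega
    subst hd1
    have hinj : Function.Injective (fun k : ℕ => Finsupp.single k 1) :=
      Finsupp.single_left_injective one_ne_zero
    have h2 := hs.comp_injective hinj
    have h3 : Summable (fun k : ℕ => 1 / (2 * ((k : ℝ) + 1))) := by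
      refine h2.congr fun k => ?_
      simp only [Function.comp]
      rw [twoNpow, Finsupp.support_single_ne_zero k one_ne_zero]
      simp
    have h4 := h3.mul_left 2
    have h5 : Summable (fun k : ℕ => 1 / ((k : ℝ) + 1)) := by
      refine h4.congr fun k => ?_
      field_simp
    have h6 := (summable_nat_add_iff (f := fun n : ℕ => 1 / (n : ℝ)) 1).mp
      (h5.congr fun k => by push_cast; ring)
    exact Real.not_summable_one_div_natCast h6
  · intro h
    exact ZhangAux.main_summable d h
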